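/- The integral ∫₀^∞ ν³/(e^{aν} − 1) dν converges for every a > 0 and equals π⁴/(15a⁴); consequently the total black-body radiance obeys the Stefan–Boltzmann law Ī_bb(T) = (2h/c²)·(k_B T/h)⁴·π⁴/15, i.e. it is proportional to T⁴. -/

import Mathlib

open MeasureTheory Set Real

/-- `e^x - 1 ≥ x e^{x/2}` for `x ≥ 0`. -/
lemma exp_sub_one_ge {x : ℝ} (hx : 0 ≤ x) : x * Real.exp (x / 2) ≤ Real.exp x - 1 := by
  have hs : x / 2 ≤ Real.sinh (x / 2) := Real.self_le_sinh_iff.mpr (by linarith)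
  rw [Real.sinh_eq] at hs
  have hu : (0 : ℝ) < Real.exp (x / 2) := Real.exp_pos _
  have h1 : Real.exp (-(x / 2)) = 1 / Real.exp (x / 2) := by
    rw [Real.exp_neg]; ring
  have h2 : Real.exp x = Real.exp (x / 2) * Real.exp (x / 2) := by
    rw [← Real.exp_add]; ring_nf
  rw [h1] at hs
  rw [h2]
  set u := Real.exp (x / 2)
  have hx2 : x ≤ u - 1 / u := by linarith
  have := mul_le_mul_of_nonneg_right hx2 hu.le
  rw [sub_mul, one_div, inv_mul_cancel₀ hu.ne'] at this
  linarith

lemma bose_integral {a : ℝ} (ha : 0 < a) :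
    IntegrableOn (fun ν => ν ^ 3 / (Real.exp (a * ν) - 1)) (Ioi (0 : ℝ)) ∧
    ∫ ν in Ioi (0 : ℝ), ν ^ 3 / (Real.exp (a * ν) - 1) = π ^ 4 / (15 * a ^ 4) := by
  set f : ℝ → ℝ := fun ν => ν ^ 3 / (Real.exp (a * ν) - 1) with hf
  set F : ℕ → ℝ → ℝ := fun n ν => ν ^ 3 * Real.exp (-((n + 1 : ℝ) * a * ν)) with hF
  -- each term is integrable
  have hFint : ∀ n : ℕ, IntegrableOn (F n) (Ioi 0) := by
    intro n
    have hb : (0 : ℝ) < (n + 1 : ℝ) * a := by positivity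
    have := integrableOn_rpow_mul_exp_neg_mul_rpow (p := 1) (s := 3)
      (b := (n + 1 : ℝ) * a) (by norm_num) (by norm_num) hb
    refine this.congr_fun (fun t ht => ?_) measurableSet_Ioi
    simp only [Real.rpow_one, F]
    rw [← Real.rpow_natCast t 3]
    norm_num
  -- value of each term
  have hFval : ∀ n : ℕ, ∫ ν in Ioi (0 : ℝ), F n ν = 6 / ((n + 1 : ℝ) ^ 4 * a ^ 4) := by
    intro n
    have hb : (0 : ℝ) < (n + 1 : ℝ) * a := by positivity
    have hG : Real.Gamma 4 = 6 := by
      have h4 : (4 : ℝ) = (3 : ℕ) + 1 := by norm_num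
      rw [h4, Real.Gamma_nat_eq_factorial]
      norm_num [Nat.factorial]
    have hkey := integral_rpow_mul_exp_neg_mul_Ioi (a := 4) (r := (n + 1 : ℝ) * a)
      (by norm_num) hb
    rw [hG] at hkey
    have heq : ∀ t ∈ Ioi (0 : ℝ),
        t ^ ((4 : ℝ) - 1) * Real.exp (-((n + 1 : ℝ) * a * t)) = F n t := by
      intro t ht
      have h31 : (4 : ℝ) - 1 = ((3 : ℕ) : ℝ) := by norm_num
      rw [h31, Real.rpow_natCast]
    rw [setIntegral_congr_fun measurableSet_Ioi heq] at hkey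
    rw [hkey]
    have hpow : ((1 : ℝ) / ((n + 1 : ℝ) * a)) ^ (4 : ℝ)
        = ((1 : ℝ) / ((n + 1 : ℝ) * a)) ^ (4 : ℕ) := by
      rw [← Real.rpow_natCast]; norm_num
    rw [hpow]
    field_simp
  -- pointwise identity on Ioi 0
  have hfF : ∀ ν ∈ Ioi (0 : ℝ), f ν = ∑' n, F n ν := by
    intro ν hν
    have hν : 0 < ν := hν
    set r : ℝ := Real.exp (-(a * ν)) with hr
    have hr0 : 0 < r := Real.exp_pos _
    have hr1 : r < 1 := by
      rw [hr, Real.exp_lt_one_iff]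
      nlinarith
    have hterm : ∀ n : ℕ, F n ν = ν ^ 3 * r ^ (n + 1) := by
      intro n
      simp only [F, hr]
      rw [← Real.exp_nat_mul]
      congr 1
      push_cast
      ring
    rw [tsum_congr hterm, tsum_mul_left]
    have hgeo : ∑' n : ℕ, r ^ (n + 1) = r / (1 - r) := by
      have := tsum_geometric_of_lt_one hr0.le hr1
      calc ∑' n : ℕ, r ^ (n + 1) = ∑' n : ℕ, r * r ^ n := by
            apply tsum_congr; intro n; rw [pow_succ]; ring
        _ = r * ∑' n : ℕ, r ^ n := tsum_mul_left
        _ = r * (1 - r)⁻¹ := by rw [this]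
        _ = r / (1 - r) := by rw [div_eq_mul_inv]
    rw [hgeo]
    have hexp : Real.exp (a * ν) = 1 / r := by
      rw [hr, Real.exp_neg]; field_simp
    rw [hf]
    simp only
    rw [hexp]
    have h1r : 1 - r ≠ 0 := by linarith
    field_simp
  -- integrability of f
  have hfm : AEStronglyMeasurable f (volume.restrict (Ioi (0 : ℝ))) := by
    apply Measurable.aestronglyMeasurable
    exact (measurable_id.pow_const 3).div
      (((measurable_const.mul measurable_id).exp).sub measurable_const)
  have hbound_int : IntegrableOn (fun ν : ℝ => ν ^ 2 / a * Real.exp (-(a / 2) * ν))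
      (Ioi 0) := by
    have := integrableOn_rpow_mul_exp_neg_mul_rpow (p := 1) (s := 2)
      (b := a / 2) (by norm_num) (by norm_num) (by positivity)
    have h2 : IntegrableOn (fun x : ℝ => 1 / a * (x ^ (2 : ℝ) * Real.exp (-(a / 2) * x ^ (1 : ℝ)))) (Ioi 0) := this.const_mul (1 / a)
    refine h2.congr_fun (fun t ht => ?_) measurableSet_Ioi
    simp only [Real.rpow_one]
    rw [← Real.rpow_natCast t 2]
    push_cast
    ring
  have hfint : IntegrableOn f (Ioi 0) := by
    refine hbound_int.mono' hfm ?_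
    rw [ae_restrict_iff' measurableSet_Ioi]
    filter_upwards with ν hν
    have hν : 0 < ν := hν
    have hden : 0 < Real.exp (a * ν) - 1 := by
      have : (1 : ℝ) < Real.exp (a * ν) := by
        nlinarith [Real.add_one_le_exp (a * ν)]
      linarith
    have hfnn : 0 ≤ f ν := by
      apply div_nonneg (by positivity) hden.le
    rw [Real.norm_of_nonneg hfnn]
    have hkey : a * ν * Real.exp (a * ν / 2) ≤ Real.exp (a * ν) - 1 :=
      exp_sub_one_ge (by positivity)
    have hE : 0 < Real.exp (a * ν / 2) := Real.exp_pos _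
    have step : f ν ≤ ν ^ 3 / (a * ν * Real.exp (a * ν / 2)) := by
      apply div_le_div_of_nonneg_left (by positivity) (by positivity) hkey
    calc f ν ≤ ν ^ 3 / (a * ν * Real.exp (a * ν / 2)) := step
      _ = ν ^ 2 / a * Real.exp (-(a / 2) * ν) := by
          rw [show -(a / 2) * ν = -(a * ν / 2) by ring, Real.exp_neg]
          field_simp
  refine ⟨hfint, ?_⟩
  -- summability of the integrals of the norms
  have hnorm : ∀ n : ℕ, ∫ ν in Ioi (0 : ℝ), ‖F n ν‖ = 6 / ((n + 1 : ℝ) ^ 4 * a ^ 4) := by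
    intro n
    rw [← hFval n]
    refine setIntegral_congr_fun measurableSet_Ioi (fun ν hν => ?_)
    have hν : 0 < ν := hν
    exact Real.norm_of_nonneg (by positivity)
  have hzeta : HasSum (fun n : ℕ => 1 / ((n : ℝ) + 1) ^ 4) (π ^ 4 / 90) := by
    have h0 := hasSum_zeta_four
    have h1 := (hasSum_nat_add_iff' (f := fun n : ℕ => 1 / (n : ℝ) ^ 4) 1).mpr h0
    simp only [Finset.range_one, Finset.sum_singleton, Nat.cast_zero] at h1
    norm_num at h1
    convert h1 using 2 with n
    · rfl
    · ring
  have hS : HasSum (fun n : ℕ => 6 / (((n : ℝ) + 1) ^ 4 * a ^ 4)) (6 / a ^ 4 * (π ^ 4 / 90)) := by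
    have hm := hzeta.mul_left (6 / a ^ 4)
    convert hm using 2 with n
    · rfl
    · field_simp
  have hsum : Summable fun n : ℕ => ∫ ν in Ioi (0 : ℝ), ‖F n ν‖ := by
    refine Summable.congr hS.summable (fun n => ?_)
    rw [hnorm n]
  have hswap : ∫ ν in Ioi (0 : ℝ), f ν = ∑' n, ∫ ν in Ioi (0 : ℝ), F n ν := by
    rw [setIntegral_congr_fun measurableSet_Ioi hfF]
    exact (integral_tsum_of_summable_integral_norm hFint hsum).symm
  rw [hswap, tsum_congr hFval, hS.tsum_eq]
  field_simp
  ring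

/-- `∫₀^∞ ν³/(e^{aν} − 1) dν` converges for every `a > 0` and equals `π⁴/(15a⁴)`;
consequently the total black-body radiance obeys the Stefan–Boltzmann law
`Ī_bb(T) = (2h/c²)·(k_B T/h)⁴·π⁴/15`. -/
theorem stefan_boltzmann_law
    (h c kB : ℝ) (hh : 0 < h) (hc : 0 < c) (hk : 0 < kB)
    (T : ℝ) (hT : 0 < T) :
    (∀ a : ℝ, 0 < a →
      IntegrableOn (fun ν => ν ^ 3 / (Real.exp (a * ν) - 1)) (Ioi (0 : ℝ)) ∧
      ∫ ν in Ioi (0 : ℝ), ν ^ 3 / (Real.exp (a * ν) - 1) = π ^ 4 / (15 * a ^ 4)) ∧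
    ∫ ν in Ioi (0 : ℝ),
        (2 * h * ν ^ 3 / c ^ 2) * (1 / (Real.exp (h * ν / (kB * T)) - 1))
      = (2 * h / c ^ 2) * (kB * T / h) ^ 4 * π ^ 4 / 15 := by
  refine ⟨fun a ha => bose_integral ha, ?_⟩
  set a := h / (kB * T) with haa
  have ha : 0 < a := by positivity
  have hb := bose_integral ha
  have hcong : ∀ ν : ℝ,
      (2 * h * ν ^ 3 / c ^ 2) * (1 / (Real.exp (h * ν / (kB * T)) - 1))
        = (2 * h / c ^ 2) * (ν ^ 3 / (Real.exp (a * ν) - 1)) := by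
    intro ν
    have : h * ν / (kB * T) = a * ν := by rw [haa]; ring
    rw [this]
    ring
  simp only [hcong]
  rw [MeasureTheory.integral_const_mul, hb.2, haa]
  rw [div_pow, div_pow]
  field_simp
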